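/- For any matrix $H \in \mathbb{R}^{d\times 2}$, $\|H\|_* \ge s_1(\sigma(H)) + s_2(\sigma(H))$ does NOT hold in general; however, the infimum over all $H$ with $\sigma(H)$ having prescribed singular values $\{s_1, s_2\}$ of the nuclear norm $\|H\|_*$ equals $s_1 + s_2$, and this infimum is attained by any nonnegative matrix $H \ge 0$ with singular values $\{s_1, s_2\}$ (for which $\sigma(H) = H$). -/

import Mathlib

open Matrix BigOperators

noncomputable def frobSq {m n : ℕ} (A : Matrix (Fin m) (Fin n) ℝ) : ℝ :=
  ∑ i, ∑ j, (A i j)^2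

noncomputable def singVals {m n : ℕ} (A : Matrix (Fin m) (Fin n) ℝ) : Fin n → ℝ :=
  fun i => Real.sqrt ((Matrix.posSemidef_conjTranspose_mul_self A).isHermitian.eigenvalues i)

noncomputable def nuclearNorm {m n : ℕ} (A : Matrix (Fin m) (Fin n) ℝ) : ℝ :=
  ∑ i, singVals A i

noncomputable def relu : ℝ → ℝ := fun t => max t 0

set_option maxHeartbeats 1000000

section EigLemmas

lemma trace_eq_sum_eig {n : ℕ} {A : Matrix (Fin n) (Fin n) ℝ} (hA : A.IsHermitian) :
    A.trace = ∑ i, hA.eigenvalues i := by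
  conv_lhs => rw [show A = (hA.eigenvectorUnitary : Matrix (Fin n) (Fin n) ℝ) *
      Matrix.diagonal (RCLike.ofReal ∘ hA.eigenvalues) *
      star (hA.eigenvectorUnitary : Matrix (Fin n) (Fin n) ℝ) from hA.spectral_theorem]
  rw [Matrix.trace_mul_cycle]
  rw [show (star (hA.eigenvectorUnitary : Matrix (Fin n) (Fin n) ℝ)) *
      (hA.eigenvectorUnitary : Matrix (Fin n) (Fin n) ℝ) = 1 from
    Matrix.mem_unitaryGroup_iff'.mp (hA.eigenvectorUnitary).2]
  rw [Matrix.one_mul, Matrix.trace_diagonal]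
  simp [RCLike.ofReal_real_eq_id]

lemma trace_sq_eq_sum_eig_sq {n : ℕ} {A : Matrix (Fin n) (Fin n) ℝ} (hA : A.IsHermitian) :
    (A * A).trace = ∑ i, hA.eigenvalues i ^ 2 := by
  set U : Matrix (Fin n) (Fin n) ℝ := (hA.eigenvectorUnitary : Matrix (Fin n) (Fin n) ℝ) with hU
  set D : Matrix (Fin n) (Fin n) ℝ := Matrix.diagonal (RCLike.ofReal ∘ hA.eigenvalues) with hD
  have h1 : star U * U = 1 := Matrix.mem_unitaryGroup_iff'.mp (hA.eigenvectorUnitary).2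
  have h2 : A = U * D * star U := hA.spectral_theorem
  have h3 : A * A = U * (D * D) * star U := by
    rw [h2]
    calc U * D * star U * (U * D * star U) = U * D * (star U * U) * (D * star U) := by
          simp only [Matrix.mul_assoc]
        _ = U * (D * D) * star U := by rw [h1]; simp only [Matrix.mul_one, Matrix.mul_assoc]
  rw [h3, Matrix.trace_mul_cycle, ← Matrix.mul_assoc, h1, Matrix.one_mul, hD,
    Matrix.diagonal_mul_diagonal, Matrix.trace_diagonal]
  simp [RCLike.ofReal_real_eq_id, pow_two]

lemma det_eq_prod_eig {n : ℕ} {A : Matrix (Fin n) (Fin n) ℝ} (hA : A.IsHermitian) :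
    A.det = ∏ i, hA.eigenvalues i := by
  have := hA.det_eq_prod_eigenvalues
  simpa [RCLike.ofReal_real_eq_id] using this

lemma nuclear_two {d : ℕ} (A : Matrix (Fin d) (Fin 2) ℝ) :
    nuclearNorm A = Real.sqrt ((Aᵀ * A).trace + 2 * Real.sqrt ((Aᵀ * A).det)) := by
  have hT : Aᴴ = Aᵀ := Matrix.conjTranspose_eq_transpose_of_trivial A
  have hP := Matrix.posSemidef_conjTranspose_mul_self A
  set l := hP.isHermitian.eigenvalues with hl
  have h0 : 0 ≤ l 0 := hP.eigenvalues_nonneg 0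
  have h1 : 0 ≤ l 1 := hP.eigenvalues_nonneg 1
  have htr : (Aᵀ * A).trace = l 0 + l 1 := by
    rw [← hT, trace_eq_sum_eig hP.isHermitian, Fin.sum_univ_two]
  have hdet : (Aᵀ * A).det = l 0 * l 1 := by
    rw [← hT, det_eq_prod_eig hP.isHermitian, Fin.prod_univ_two]
  have hnn : nuclearNorm A = Real.sqrt (l 0) + Real.sqrt (l 1) := by
    rw [nuclearNorm, Fin.sum_univ_two]; rfl
  rw [hnn, htr, hdet]
  rw [show l 0 + l 1 + 2 * Real.sqrt (l 0 * l 1)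
      = (Real.sqrt (l 0) + Real.sqrt (l 1)) ^ 2 by
    rw [Real.sqrt_mul h0]
    have e0 := Real.sq_sqrt h0
    have e1 := Real.sq_sqrt h1
    nlinarith [e0, e1]]
  exact (Real.sqrt_sq (by positivity)).symm

lemma nuclear_three (A : Matrix (Fin 3) (Fin 3) ℝ) :
    ∃ l0 l1 l2 : ℝ, 0 ≤ l0 ∧ 0 ≤ l1 ∧ 0 ≤ l2 ∧
      l0 + l1 + l2 = (Aᵀ * A).trace ∧
      l0 ^ 2 + l1 ^ 2 + l2 ^ 2 = ((Aᵀ * A) * (Aᵀ * A)).trace ∧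
      l0 * l1 * l2 = (Aᵀ * A).det ∧
      nuclearNorm A = Real.sqrt l0 + Real.sqrt l1 + Real.sqrt l2 := by
  have hT : Aᴴ = Aᵀ := Matrix.conjTranspose_eq_transpose_of_trivial A
  have hP := Matrix.posSemidef_conjTranspose_mul_self A
  set l := hP.isHermitian.eigenvalues with hl
  refine ⟨l 0, l 1, l 2, hP.eigenvalues_nonneg 0, hP.eigenvalues_nonneg 1,
    hP.eigenvalues_nonneg 2, ?_, ?_, ?_, ?_⟩
  · rw [← hT, trace_eq_sum_eig hP.isHermitian, Fin.sum_univ_three]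
  · rw [← hT, trace_sq_eq_sum_eig_sq hP.isHermitian, Fin.sum_univ_three]
  · rw [← hT, det_eq_prod_eig hP.isHermitian, Fin.prod_univ_three]
  · rw [nuclearNorm, Fin.sum_univ_three]; rfl

end EigLemmas

section ScalarLemmas

lemma sqrtsum_M (l0 l1 l2 : ℝ) (h0 : 0 ≤ l0) (h1 : 0 ≤ l1) (h2 : 0 ≤ l2)
    (hs : l0 + l1 + l2 = 18) (hs2 : l0 ^ 2 + l1 ^ 2 + l2 ^ 2 = 162)
    (hp : l0 * l1 * l2 = 0) :
    Real.sqrt l0 + Real.sqrt l1 + Real.sqrt l2 = 6 := by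
  have e0 : Real.sqrt l0 ^ 2 = l0 := Real.sq_sqrt h0
  have e1 : Real.sqrt l1 ^ 2 = l1 := Real.sq_sqrt h1
  have e2 : Real.sqrt l2 ^ 2 = l2 := Real.sq_sqrt h2
  have n0 : 0 ≤ Real.sqrt l0 := Real.sqrt_nonneg _
  have n1 : 0 ≤ Real.sqrt l1 := Real.sqrt_nonneg _
  have n2 : 0 ≤ Real.sqrt l2 := Real.sqrt_nonneg _
  have h324 : (l0 + l1 + l2) ^ 2 = 324 := by rw [hs]; norm_num
  have he2 : l0 * l1 + l0 * l2 + l1 * l2 = 81 := by linear_combination h324 / 2 - hs2 / 2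
  have hm : Real.sqrt l0 * Real.sqrt l1 * Real.sqrt l2 = 0 := by
    have hsq : (Real.sqrt l0 * Real.sqrt l1 * Real.sqrt l2) ^ 2 = 0 := by
      rw [mul_pow, mul_pow, e0, e1, e2]; exact hp
    exact pow_eq_zero_iff (n := 2) (by norm_num) |>.mp hsq
  have hc2 : (Real.sqrt l0 * Real.sqrt l1 + Real.sqrt l0 * Real.sqrt l2
      + Real.sqrt l1 * Real.sqrt l2) ^ 2 = 81 := by
    linear_combination (Real.sqrt l1 ^ 2 + Real.sqrt l2 ^ 2) * e0
      + (l0 + Real.sqrt l2 ^ 2) * e1 + (l0 + l1) * e2 + he2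
      + 2 * (Real.sqrt l0 + Real.sqrt l1 + Real.sqrt l2) * hm
  have hcn : 0 ≤ Real.sqrt l0 * Real.sqrt l1 + Real.sqrt l0 * Real.sqrt l2
      + Real.sqrt l1 * Real.sqrt l2 := by positivity
  have hc9 : Real.sqrt l0 * Real.sqrt l1 + Real.sqrt l0 * Real.sqrt l2
      + Real.sqrt l1 * Real.sqrt l2 = 9 := by
    have hfac : (Real.sqrt l0 * Real.sqrt l1 + Real.sqrt l0 * Real.sqrt l2
        + Real.sqrt l1 * Real.sqrt l2 - 9) * (Real.sqrt l0 * Real.sqrt l1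
        + Real.sqrt l0 * Real.sqrt l2 + Real.sqrt l1 * Real.sqrt l2 + 9) = 0 := by
      linear_combination hc2
    rcases mul_eq_zero.mp hfac with h | h
    · linarith
    · linarith
  have hN2 : (Real.sqrt l0 + Real.sqrt l1 + Real.sqrt l2) ^ 2 = 36 := by
    linear_combination e0 + e1 + e2 + hs + 2 * hc9
  have hfac : (Real.sqrt l0 + Real.sqrt l1 + Real.sqrt l2 - 6)
      * (Real.sqrt l0 + Real.sqrt l1 + Real.sqrt l2 + 6) = 0 := by linear_combination hN2
  rcases mul_eq_zero.mp hfac with h | h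
  · linarith
  · linarith

lemma sqrtsum_S (l0 l1 l2 : ℝ) (h0 : 0 ≤ l0) (h1 : 0 ≤ l1) (h2 : 0 ≤ l2)
    (hs : l0 + l1 + l2 = 17) (hs2 : l0 ^ 2 + l1 ^ 2 + l2 ^ 2 = 145)
    (hp : l0 * l1 * l2 = 16) :
    6 < Real.sqrt l0 + Real.sqrt l1 + Real.sqrt l2 := by
  have e0 : Real.sqrt l0 ^ 2 = l0 := Real.sq_sqrt h0
  have e1 : Real.sqrt l1 ^ 2 = l1 := Real.sq_sqrt h1
  have e2 : Real.sqrt l2 ^ 2 = l2 := Real.sq_sqrt h2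
  have n0 : 0 ≤ Real.sqrt l0 := Real.sqrt_nonneg _
  have n1 : 0 ≤ Real.sqrt l1 := Real.sqrt_nonneg _
  have n2 : 0 ≤ Real.sqrt l2 := Real.sqrt_nonneg _
  set N := Real.sqrt l0 + Real.sqrt l1 + Real.sqrt l2 with hNdef
  have hNn : 0 ≤ N := by positivity
  have h289 : (l0 + l1 + l2) ^ 2 = 289 := by rw [hs]; norm_num
  have he2 : l0 * l1 + l0 * l2 + l1 * l2 = 72 := by linear_combination h289 / 2 - hs2 / 2
  have hm : Real.sqrt l0 * Real.sqrt l1 * Real.sqrt l2 = 4 := by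
    have hsq : (Real.sqrt l0 * Real.sqrt l1 * Real.sqrt l2) ^ 2 = 16 := by
      rw [mul_pow, mul_pow, e0, e1, e2]; exact hp
    have hnn : 0 ≤ Real.sqrt l0 * Real.sqrt l1 * Real.sqrt l2 := by positivity
    have hfac : (Real.sqrt l0 * Real.sqrt l1 * Real.sqrt l2 - 4)
        * (Real.sqrt l0 * Real.sqrt l1 * Real.sqrt l2 + 4) = 0 := by linear_combination hsq
    rcases mul_eq_zero.mp hfac with h | h
    · linarith
    · linarith
  have hc2 : (Real.sqrt l0 * Real.sqrt l1 + Real.sqrt l0 * Real.sqrt l2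
      + Real.sqrt l1 * Real.sqrt l2) ^ 2 = 72 + 8 * N := by
    rw [hNdef]
    linear_combination (Real.sqrt l1 ^ 2 + Real.sqrt l2 ^ 2) * e0
      + (l0 + Real.sqrt l2 ^ 2) * e1 + (l0 + l1) * e2 + he2
      + 2 * (Real.sqrt l0 + Real.sqrt l1 + Real.sqrt l2) * hm
  have hcn : 0 ≤ Real.sqrt l0 * Real.sqrt l1 + Real.sqrt l0 * Real.sqrt l2
      + Real.sqrt l1 * Real.sqrt l2 := by positivity
  have hN2 : N ^ 2 = 17 + 2 * (Real.sqrt l0 * Real.sqrt l1 + Real.sqrt l0 * Real.sqrt l2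
      + Real.sqrt l1 * Real.sqrt l2) := by
    rw [hNdef]; linear_combination e0 + e1 + e2 + hs
  by_contra hle
  push_neg at hle
  have hN17 : 17 ≤ N ^ 2 := by linarith
  have hN4 : 4 ≤ N := by
    by_contra h4
    push_neg at h4
    nlinarith [mul_pos (by linarith : (0:ℝ) < 4 - N) (by linarith : (0:ℝ) < 4 + N)]
  have hquart : (N ^ 2 - 17) ^ 2 = 288 + 32 * N := by
    linear_combination (N ^ 2 - 17 + 2 * (Real.sqrt l0 * Real.sqrt l1
      + Real.sqrt l0 * Real.sqrt l2 + Real.sqrt l1 * Real.sqrt l2)) * hN2 + 4 * hc2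
  have h36 : N ^ 2 ≤ 36 := by
    have hh := mul_nonneg (by linarith : (0:ℝ) ≤ 6 - N) (by linarith : (0:ℝ) ≤ 6 + N)
    nlinarith [hh]
  have hkey : 0 ≤ (36 - N ^ 2) * (N ^ 2 - 17) := mul_nonneg (by linarith) (by linarith)
  nlinarith [hquart, hkey, h36, hN4]

lemma key_scalar (p q p' q' a b c e : ℝ)
    (hp : 0 ≤ p) (hq : 0 ≤ q) (hp' : 0 ≤ p') (hq' : 0 ≤ q')
    (ha0 : 0 ≤ a) (hb0 : 0 ≤ b) (hc0 : 0 ≤ c) (he0 : 0 ≤ e)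
    (ha : a ^ 2 ≤ p * p') (hb : b ^ 2 ≤ p * q') (hc : c ^ 2 ≤ q * p') (he : e ^ 2 ≤ q * q') :
    p + p' + 2 * Real.sqrt (p * p' - a ^ 2) ≤
      (p + q) + (p' + q') + 2 * Real.sqrt ((p + q) * (p' + q') - (a + e - b - c) ^ 2) := by
  rcases le_or_gt 0 (a + e - b - c) with hs | hs
  · have hDD : p * p' - a ^ 2 ≤ (p + q) * (p' + q') - (a + e - b - c) ^ 2 := by
      have hs2 : (a + e - b - c) ^ 2 ≤ (a + e) ^ 2 := by nlinarith [hs, hb0, hc0]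
      have haepq : (a * e) ^ 2 ≤ (p * q') * (q * p') := by
        calc (a * e) ^ 2 = a ^ 2 * e ^ 2 := by ring
          _ ≤ (p * p') * (q * q') := by
              exact mul_le_mul ha he (sq_nonneg e) (mul_nonneg hp hp')
          _ = (p * q') * (q * p') := by ring
      have h2ae : 2 * (a * e) ≤ p * q' + q * p' := by
        nlinarith [sq_nonneg (p * q' - q * p'), haepq, mul_nonneg ha0 he0,
          mul_nonneg (mul_nonneg hp hq') (mul_nonneg hq hp')]
      nlinarith [hs2, he, h2ae]
    have := Real.sqrt_le_sqrt hDD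
    nlinarith [this, hq, hq']
  · have hb' : b ≤ Real.sqrt p * Real.sqrt q' := by
      have : b = Real.sqrt (b ^ 2) := by rw [Real.sqrt_sq hb0]
      rw [this, ← Real.sqrt_mul hp]
      exact Real.sqrt_le_sqrt hb
    have hc' : c ≤ Real.sqrt q * Real.sqrt p' := by
      have : c = Real.sqrt (c ^ 2) := by rw [Real.sqrt_sq hc0]
      rw [this, ← Real.sqrt_mul hq]
      exact Real.sqrt_le_sqrt hc
    have ep : Real.sqrt p ^ 2 = p := Real.sq_sqrt hp
    have eq' : Real.sqrt q ^ 2 = q := Real.sq_sqrt hq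
    have ep' : Real.sqrt p' ^ 2 = p' := Real.sq_sqrt hp'
    have eq'' : Real.sqrt q' ^ 2 = q' := Real.sq_sqrt hq'
    have np : 0 ≤ Real.sqrt p := Real.sqrt_nonneg _
    have nq : 0 ≤ Real.sqrt q := Real.sqrt_nonneg _
    have np' : 0 ≤ Real.sqrt p' := Real.sqrt_nonneg _
    have nq' : 0 ≤ Real.sqrt q' := Real.sqrt_nonneg _
    have h1 : Real.sqrt (p * p' - a ^ 2) ≤ Real.sqrt p * Real.sqrt p' := by
      rw [← Real.sqrt_mul hp]
      exact Real.sqrt_le_sqrt (by nlinarith [sq_nonneg a])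
    have h2 : (Real.sqrt p * Real.sqrt p' - Real.sqrt q * Real.sqrt q') ^ 2 ≤
        (p + q) * (p' + q') - (a + e - b - c) ^ 2 := by
      have hsneg : (a + e - b - c) ^ 2 ≤ (b + c) ^ 2 := by nlinarith [hs, ha0, he0]
      have hbc : b * c ≤ (Real.sqrt p * Real.sqrt q') * (Real.sqrt q * Real.sqrt p') := by
        exact mul_le_mul hb' hc' hc0 (mul_nonneg np nq')
      nlinarith [hsneg, hb, hc, hbc, ep, eq', ep', eq'']
    have h2' : Real.sqrt p * Real.sqrt p' - Real.sqrt q * Real.sqrt q' ≤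
        Real.sqrt ((p + q) * (p' + q') - (a + e - b - c) ^ 2) := by
      rcases le_or_gt (Real.sqrt p * Real.sqrt p' - Real.sqrt q * Real.sqrt q') 0 with h | h
      · exact h.trans (Real.sqrt_nonneg _)
      · calc Real.sqrt p * Real.sqrt p' - Real.sqrt q * Real.sqrt q'
            = Real.sqrt ((Real.sqrt p * Real.sqrt p' - Real.sqrt q * Real.sqrt q') ^ 2) := by
              rw [Real.sqrt_sq h.le]
          _ ≤ _ := Real.sqrt_le_sqrt h2
    have h3 : Real.sqrt q * Real.sqrt q' ≤ (q + q') / 2 := by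
      nlinarith [sq_nonneg (Real.sqrt q - Real.sqrt q'), eq', eq'']
    linarith [h1, h2', h3]

end ScalarLemmas

section ReluLemmas

lemma relu_nonneg (t : ℝ) : 0 ≤ relu t := le_max_right _ _

lemma relu_sub (t : ℝ) : relu t - relu (-t) = t := by
  rcases le_total t 0 with h | h
  · rw [show relu t = 0 from max_eq_right h, show relu (-t) = -t from
      max_eq_left (neg_nonneg.mpr h)]; ring
  · rw [show relu t = t from max_eq_left h, show relu (-t) = 0 from
      max_eq_right (neg_nonpos.mpr h)]; ring

lemma relu_mul_neg (t : ℝ) : relu t * relu (-t) = 0 := by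
  rcases le_total t 0 with h | h
  · rw [show relu t = 0 from max_eq_right h]; ring
  · rw [show relu (-t) = 0 from max_eq_right (neg_nonpos.mpr h)]; ring

lemma relu_sq_add (t : ℝ) : relu t ^ 2 + relu (-t) ^ 2 = t ^ 2 := by
  have h1 := relu_sub t
  have h2 := relu_mul_neg t
  linear_combination (relu t - relu (-t) + t) * h1 + 2 * h2

lemma relu_mul_expand (t s : ℝ) : t * s =
    relu t * relu s + relu (-t) * relu (-s) - relu t * relu (-s) - relu (-t) * relu s := by
  have h1 := relu_sub t
  have h2 := relu_sub s
  linear_combination (- s) * h1 - (relu t - relu (-t)) * h2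

end ReluLemmas

section GramLemmas

lemma trace_gram {d : ℕ} (A : Matrix (Fin d) (Fin 2) ℝ) :
    (Aᵀ * A).trace = (∑ i, A i 0 ^ 2) + (∑ i, A i 1 ^ 2) := by
  simp only [Matrix.trace, Matrix.diag, Matrix.mul_apply, Matrix.transpose_apply,
    Fin.sum_univ_two, sq]

lemma det_gram {d : ℕ} (A : Matrix (Fin d) (Fin 2) ℝ) :
    (Aᵀ * A).det = (∑ i, A i 0 ^ 2) * (∑ i, A i 1 ^ 2) - (∑ i, A i 0 * A i 1) ^ 2 := by
  rw [Matrix.det_fin_two]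
  simp only [Matrix.mul_apply, Matrix.transpose_apply]
  rw [show ∑ i, A i 1 * A i 0 = ∑ i, A i 0 * A i 1 from
    Finset.sum_congr rfl (fun i _ => mul_comm _ _)]
  simp only [sq]

lemma key_matrix {d : ℕ} (H : Matrix (Fin d) (Fin 2) ℝ) :
    ((H.map relu)ᵀ * (H.map relu)).trace + 2 * Real.sqrt (((H.map relu)ᵀ * (H.map relu)).det) ≤
      (Hᵀ * H).trace + 2 * Real.sqrt ((Hᵀ * H).det) := by
  have hmap : ∀ (i : Fin d) (j : Fin 2), (H.map relu) i j = relu (H i j) := fun i j => rfl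
  set p := ∑ i, relu (H i 0) ^ 2 with hpdef
  set q := ∑ i, relu (-(H i 0)) ^ 2 with hqdef
  set p' := ∑ i, relu (H i 1) ^ 2 with hp'def
  set q' := ∑ i, relu (-(H i 1)) ^ 2 with hq'def
  set a := ∑ i, relu (H i 0) * relu (H i 1) with hadef
  set b := ∑ i, relu (H i 0) * relu (-(H i 1)) with hbdef
  set c := ∑ i, relu (-(H i 0)) * relu (H i 1) with hcdef
  set e := ∑ i, relu (-(H i 0)) * relu (-(H i 1)) with hedef
  have hsum0 : ∑ i, H i 0 ^ 2 = p + q := by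
    rw [hpdef, hqdef, ← Finset.sum_add_distrib]
    exact Finset.sum_congr rfl fun i _ => (relu_sq_add (H i 0)).symm
  have hsum1 : ∑ i, H i 1 ^ 2 = p' + q' := by
    rw [hp'def, hq'def, ← Finset.sum_add_distrib]
    exact Finset.sum_congr rfl fun i _ => (relu_sq_add (H i 1)).symm
  have hcross : ∑ i, H i 0 * H i 1 = a + e - b - c := by
    have h : ∑ i, H i 0 * H i 1 = ∑ i, (relu (H i 0) * relu (H i 1)
        + relu (-(H i 0)) * relu (-(H i 1)) - relu (H i 0) * relu (-(H i 1))
        - relu (-(H i 0)) * relu (H i 1)) :=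
      Finset.sum_congr rfl fun i _ => relu_mul_expand (H i 0) (H i 1)
    rw [h, hadef, hedef, hbdef, hcdef]
    rw [Finset.sum_sub_distrib, Finset.sum_sub_distrib, Finset.sum_add_distrib]
  have hp : 0 ≤ p := Finset.sum_nonneg fun i _ => sq_nonneg _
  have hq : 0 ≤ q := Finset.sum_nonneg fun i _ => sq_nonneg _
  have hp' : 0 ≤ p' := Finset.sum_nonneg fun i _ => sq_nonneg _
  have hq' : 0 ≤ q' := Finset.sum_nonneg fun i _ => sq_nonneg _
  have ha0 : 0 ≤ a := Finset.sum_nonneg fun i _ => mul_nonneg (relu_nonneg _) (relu_nonneg _)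
  have hb0 : 0 ≤ b := Finset.sum_nonneg fun i _ => mul_nonneg (relu_nonneg _) (relu_nonneg _)
  have hc0 : 0 ≤ c := Finset.sum_nonneg fun i _ => mul_nonneg (relu_nonneg _) (relu_nonneg _)
  have he0 : 0 ≤ e := Finset.sum_nonneg fun i _ => mul_nonneg (relu_nonneg _) (relu_nonneg _)
  have ha : a ^ 2 ≤ p * p' :=
    Finset.sum_mul_sq_le_sq_mul_sq Finset.univ (fun i => relu (H i 0)) (fun i => relu (H i 1))
  have hb : b ^ 2 ≤ p * q' :=
    Finset.sum_mul_sq_le_sq_mul_sq Finset.univ (fun i => relu (H i 0)) (fun i => relu (-(H i 1)))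
  have hc : c ^ 2 ≤ q * p' :=
    Finset.sum_mul_sq_le_sq_mul_sq Finset.univ (fun i => relu (-(H i 0))) (fun i => relu (H i 1))
  have he : e ^ 2 ≤ q * q' :=
    Finset.sum_mul_sq_le_sq_mul_sq Finset.univ (fun i => relu (-(H i 0)))
      (fun i => relu (-(H i 1)))
  have hTσ : ((H.map relu)ᵀ * (H.map relu)).trace = p + p' := by
    rw [trace_gram]; simp only [hmap, hpdef, hp'def]
  have hDσ : ((H.map relu)ᵀ * (H.map relu)).det = p * p' - a ^ 2 := by
    rw [det_gram]; simp only [hmap, hpdef, hp'def, hadef]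
  have hTH : (Hᵀ * H).trace = (p + q) + (p' + q') := by
    rw [trace_gram, hsum0, hsum1]
  have hDH : (Hᵀ * H).det = (p + q) * (p' + q') - (a + e - b - c) ^ 2 := by
    rw [det_gram, hsum0, hsum1, hcross]
  rw [hTσ, hDσ, hTH, hDH]
  exact key_scalar p q p' q' a b c e hp hq hp' hq' ha0 hb0 hc0 he0 ha hb hc he

end GramLemmas

section Counterexample

def Mex : Matrix (Fin 3) (Fin 3) ℝ := !![-1, 0, 2; 0, 1, 2; 2, 2, 0]

lemma map_relu_Mex : Mex.map relu = !![0, 0, 2; 0, 1, 2; 2, 2, 0] := by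
  funext i j
  fin_cases i <;> fin_cases j <;>
    simp [Mex, relu, Matrix.map_apply]

lemma gram_Mex : Mexᵀ * Mex = !![5, 4, -2; 4, 5, 2; -2, 2, 8] := by
  funext i j
  simp only [Matrix.mul_apply, Matrix.transpose_apply]
  fin_cases i <;> fin_cases j <;>
    simp [Mex, Fin.sum_univ_three] <;> norm_num

lemma gram_S : (Mex.map relu)ᵀ * (Mex.map relu) = !![4, 4, 0; 4, 5, 2; 0, 2, 8] := by
  rw [map_relu_Mex]
  funext i j
  simp only [Matrix.mul_apply, Matrix.transpose_apply]
  fin_cases i <;> fin_cases j <;>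
    simp [Fin.sum_univ_three] <;> norm_num

lemma trM : (Mexᵀ * Mex).trace = 18 := by
  rw [gram_Mex]; simp [Matrix.trace_fin_three]; norm_num

lemma trM2 : ((Mexᵀ * Mex) * (Mexᵀ * Mex)).trace = 162 := by
  rw [gram_Mex]
  simp [Matrix.trace_fin_three, Matrix.mul_apply, Fin.sum_univ_three]
  norm_num

lemma detM : (Mexᵀ * Mex).det = 0 := by
  rw [gram_Mex]; simp [Matrix.det_fin_three]; norm_num

lemma trS : ((Mex.map relu)ᵀ * (Mex.map relu)).trace = 17 := by
  rw [gram_S]; simp [Matrix.trace_fin_three]; norm_num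

lemma trS2 : (((Mex.map relu)ᵀ * (Mex.map relu)) * ((Mex.map relu)ᵀ * (Mex.map relu))).trace
    = 145 := by
  rw [gram_S]
  simp [Matrix.trace_fin_three, Matrix.mul_apply, Fin.sum_univ_three]
  norm_num

lemma detS : ((Mex.map relu)ᵀ * (Mex.map relu)).det = 16 := by
  rw [gram_S]; simp [Matrix.det_fin_three]; norm_num

lemma nuclear_Mex : nuclearNorm Mex = 6 := by
  obtain ⟨l0, l1, l2, h0, h1, h2, hsum, hsum2, hprod, hnn⟩ := nuclear_three Mex
  rw [trM] at hsum
  rw [trM2] at hsum2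
  rw [detM] at hprod
  rw [hnn]
  exact sqrtsum_M l0 l1 l2 h0 h1 h2 hsum hsum2 hprod

lemma nuclear_S : 6 < nuclearNorm (Mex.map relu) := by
  obtain ⟨l0, l1, l2, h0, h1, h2, hsum, hsum2, hprod, hnn⟩ := nuclear_three (Mex.map relu)
  rw [trS] at hsum
  rw [trS2] at hsum2
  rw [detS] at hprod
  rw [hnn]
  exact sqrtsum_S l0 l1 l2 h0 h1 h2 hsum hsum2 hprod

end Counterexample

theorem stmt_10 :
    (¬ ∀ (n : ℕ) (M : Matrix (Fin n) (Fin n) ℝ),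
        nuclearNorm (M.map relu) ≤ nuclearNorm M) ∧
    (∀ (d : ℕ), 2 ≤ d → ∀ s1 s2 : ℝ, s2 ≤ s1 → 0 ≤ s2 →
      IsGLB {v : ℝ | ∃ H : Matrix (Fin d) (Fin 2) ℝ,
          Matrix.trace ((H.map relu)ᵀ * (H.map relu)) = s1 ^ 2 + s2 ^ 2 ∧
          Matrix.det ((H.map relu)ᵀ * (H.map relu)) = s1 ^ 2 * s2 ^ 2 ∧
          v = nuclearNorm H}
        (s1 + s2) ∧
      (∀ H : Matrix (Fin d) (Fin 2) ℝ, (∀ i j, 0 ≤ H i j) →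
        Matrix.trace (Hᵀ * H) = s1 ^ 2 + s2 ^ 2 →
        Matrix.det (Hᵀ * H) = s1 ^ 2 * s2 ^ 2 →
        nuclearNorm H = s1 + s2)) := by
  constructor
  · intro h
    have := h 3 Mex
    rw [nuclear_Mex] at this
    linarith [nuclear_S]
  · intro d hd s1 s2 h21 h2n
    have hs1 : 0 ≤ s1 := le_trans h2n h21
    have hsq : Real.sqrt (s1 ^ 2 * s2 ^ 2) = s1 * s2 := by
      rw [show s1 ^ 2 * s2 ^ 2 = (s1 * s2) ^ 2 by ring, Real.sqrt_sq (mul_nonneg hs1 h2n)]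
    -- exact value lemma
    have keyeq : ∀ H : Matrix (Fin d) (Fin 2) ℝ, (Hᵀ * H).trace = s1 ^ 2 + s2 ^ 2 →
        (Hᵀ * H).det = s1 ^ 2 * s2 ^ 2 → nuclearNorm H = s1 + s2 := by
      intro H htr hdet
      rw [nuclear_two, htr, hdet, hsq,
        show s1 ^ 2 + s2 ^ 2 + 2 * (s1 * s2) = (s1 + s2) ^ 2 by ring,
        Real.sqrt_sq (by linarith)]
    -- lower bound
    have hlb : ∀ v ∈ {v : ℝ | ∃ H : Matrix (Fin d) (Fin 2) ℝ,
        Matrix.trace ((H.map relu)ᵀ * (H.map relu)) = s1 ^ 2 + s2 ^ 2 ∧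
        Matrix.det ((H.map relu)ᵀ * (H.map relu)) = s1 ^ 2 * s2 ^ 2 ∧
        v = nuclearNorm H}, s1 + s2 ≤ v := by
      rintro v ⟨H, htr, hdet, rfl⟩
      have hkm := key_matrix H
      rw [htr, hdet, hsq] at hkm
      rw [nuclear_two]
      calc s1 + s2 = Real.sqrt ((s1 + s2) ^ 2) := (Real.sqrt_sq (by linarith)).symm
        _ ≤ _ := Real.sqrt_le_sqrt (by nlinarith [hkm])
    -- the witness matrix
    set i0 : Fin d := ⟨0, by omega⟩ with hi0
    set i1 : Fin d := ⟨1, by omega⟩ with hi1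
    have hi01 : i0 ≠ i1 := by
      intro hcon
      have : (0 : ℕ) = 1 := congrArg Fin.val hcon
      omega
    set H0 : Matrix (Fin d) (Fin 2) ℝ :=
      fun i j => if (i : ℕ) = (j : ℕ) then (if (j : ℕ) = 0 then s1 else s2) else 0 with hH0
    have hcol0 : ∀ i, H0 i 0 = if i = i0 then s1 else 0 := by
      intro i
      by_cases h : i = i0
      · subst h; simp [hH0, hi0]
      · have hne : (i : ℕ) ≠ 0 := by
          intro hh; exact h (Fin.ext (by simp [hi0, hh]))
        simp [hH0, hne, h]
    have hcol1 : ∀ i, H0 i 1 = if i = i1 then s2 else 0 := by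
      intro i
      by_cases h : i = i1
      · subst h; simp [hH0, hi1]
      · have hne : (i : ℕ) ≠ 1 := by
          intro hh; exact h (Fin.ext (by simp [hi1, hh]))
        simp [hH0, hne, h]
    have hsum00 : ∑ i, H0 i 0 ^ 2 = s1 ^ 2 := by
      rw [show ∑ i, H0 i 0 ^ 2 = ∑ i, (if i = i0 then s1 ^ 2 else 0) from
        Finset.sum_congr rfl fun i _ => by rw [hcol0 i]; split <;> simp]
      simp [Finset.sum_ite_eq']
    have hsum11 : ∑ i, H0 i 1 ^ 2 = s2 ^ 2 := by
      rw [show ∑ i, H0 i 1 ^ 2 = ∑ i, (if i = i1 then s2 ^ 2 else 0) from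
        Finset.sum_congr rfl fun i _ => by rw [hcol1 i]; split <;> simp]
      simp [Finset.sum_ite_eq']
    have hsum01 : ∑ i, H0 i 0 * H0 i 1 = 0 := by
      apply Finset.sum_eq_zero
      intro i _
      rw [hcol0 i, hcol1 i]
      by_cases h : i = i0
      · subst h
        rw [if_pos rfl, if_neg hi01, mul_zero]
      · rw [if_neg h, zero_mul]
    have htr0 : (H0ᵀ * H0).trace = s1 ^ 2 + s2 ^ 2 := by
      rw [trace_gram, hsum00, hsum11]
    have hdet0 : (H0ᵀ * H0).det = s1 ^ 2 * s2 ^ 2 := by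
      rw [det_gram, hsum00, hsum11, hsum01]
      ring
    have hmap0 : H0.map relu = H0 := by
      funext i j
      have hnn : 0 ≤ H0 i j := by
        simp only [hH0]
        split
        · split
          · exact hs1
          · exact h2n
        · exact le_rfl
      show relu (H0 i j) = H0 i j
      exact max_eq_left hnn
    have hmem : (s1 + s2) ∈ {v : ℝ | ∃ H : Matrix (Fin d) (Fin 2) ℝ,
        Matrix.trace ((H.map relu)ᵀ * (H.map relu)) = s1 ^ 2 + s2 ^ 2 ∧
        Matrix.det ((H.map relu)ᵀ * (H.map relu)) = s1 ^ 2 * s2 ^ 2 ∧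
        v = nuclearNorm H} := by
      refine ⟨H0, ?_, ?_, ?_⟩
      · rw [hmap0]; exact htr0
      · rw [hmap0]; exact hdet0
      · exact (keyeq H0 htr0 hdet0).symm
    refine ⟨⟨hlb, fun b hb => hb hmem⟩, fun H _ htr hdet => keyeq H htr hdet⟩
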